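/- For all s in the interval (0, 1], the relative error satisfies 0 < (ρ(s) - exp(-s))/exp(-s) < 0.0015, where ρ(s) = (s² - 6s + 12)/(s² + 6s + 12). -/
import Mathlib


/-- For `s ∈ (0,1]` the relative error of `ρ(s) = (s²-6s+12)/(s²+6s+12)` over the
exact decay factor `exp(-s)` lies strictly between `0` and `0.0015`. -/
theorem stmt_5 (s : ℝ) (hs : s ∈ Set.Ioc (0 : ℝ) 1) :
    0 < ((s ^ 2 - 6 * s + 12) / (s ^ 2 + 6 * s + 12) - Real.exp (-s)) / Real.exp (-s) ∧
    ((s ^ 2 - 6 * s + 12) / (s ^ 2 + 6 * s + 12) - Real.exp (-s)) / Real.exp (-s)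
      < 0.0015 := by
  obtain ⟨hs0, hs1⟩ := hs
  have hE : (0:ℝ) < Real.exp s := Real.exp_pos s
  have hEn : (0:ℝ) < Real.exp (-s) := Real.exp_pos (-s)
  have hEE : Real.exp (-s) * Real.exp s = 1 := by
    rw [← Real.exp_add]; simp
  have hd : (0:ℝ) < s ^ 2 + 6 * s + 12 := by nlinarith
  have hd2 : (0:ℝ) < s ^ 2 - 6 * s + 12 := by nlinarith [sq_nonneg (s - 3)]
  have hlow : 1 + s + s^2/2 + s^3/6 + s^4/24 + s^5/120 ≤ Real.exp s := by
    have h := Real.sum_le_exp_of_nonneg hs0.le 6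
    simp [Finset.sum_range_succ, Nat.factorial] at h
    linarith [h]
  have hupp : Real.exp s ≤ 1 + s + s^2/2 + s^3/6 + s^4/24 + s^5/120 + s^6/720
      + s^7/5040 + s^8 * 9 / 322560 := by
    have h := Real.exp_bound' hs0.le hs1 (n := 8) (by norm_num)
    simp [Finset.sum_range_succ, Nat.factorial] at h
    calc Real.exp s ≤ _ := h
      _ ≤ _ := by norm_num
  -- powers ≤ s^3 on (0,1]
  have p3 : (0:ℝ) < s^3 := by positivity
  have hp : ∀ k : ℕ, 3 ≤ k → s ^ k ≤ s ^ 3 := fun k hk =>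
    pow_le_pow_of_le_one hs0.le hs1 hk
  have h5 := hp 5 (by norm_num)
  have h6 := hp 6 (by norm_num)
  have h7 := hp 7 (by norm_num)
  have h8 := hp 8 (by norm_num)
  have h9 := hp 9 (by norm_num)
  have h10 := hp 10 (by norm_num)
  have key1 : s ^ 2 + 6 * s + 12 < (s ^ 2 - 6 * s + 12) * Real.exp s := by
    have h := mul_le_mul_of_nonneg_left hlow hd2.le
    nlinarith [mul_pos (pow_pos hs0 5) (by nlinarith [sq_nonneg (s-1)] : (0:ℝ) < s^2 - s + 2)]
  have key2 : (s ^ 2 - 6 * s + 12) * Real.exp s < 1.0015 * (s ^ 2 + 6 * s + 12) := by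
    have h := mul_le_mul_of_nonneg_left hupp hd2.le
    have hpoly : (s ^ 2 - 6 * s + 12) *
        (1 + s + s^2/2 + s^3/6 + s^4/24 + s^5/120 + s^6/720 + s^7/5040 + s^8 * 9 / 322560)
        < 1.0015 * (s ^ 2 + 6 * s + 12) := by
      nlinarith [h5, h6, h7, h8, h9, h10, p3, sq_nonneg s, mul_pos hs0 hs0,
        mul_pos p3 hs0, sq_nonneg (1 - s)]
    linarith
  have h1 : Real.exp (-s) * (s ^ 2 + 6 * s + 12) < s ^ 2 - 6 * s + 12 := by
    calc Real.exp (-s) * (s ^ 2 + 6 * s + 12)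
        < Real.exp (-s) * ((s ^ 2 - 6 * s + 12) * Real.exp s) :=
          mul_lt_mul_of_pos_left key1 hEn
      _ = (s ^ 2 - 6 * s + 12) * (Real.exp (-s) * Real.exp s) := by ring
      _ = s ^ 2 - 6 * s + 12 := by rw [hEE, mul_one]
  have h2 : s ^ 2 - 6 * s + 12 < 1.0015 * Real.exp (-s) * (s ^ 2 + 6 * s + 12) := by
    have := mul_lt_mul_of_pos_left key2 hEn
    calc s ^ 2 - 6 * s + 12
        = (s ^ 2 - 6 * s + 12) * (Real.exp (-s) * Real.exp s) := by rw [hEE, mul_one]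
      _ = Real.exp (-s) * ((s ^ 2 - 6 * s + 12) * Real.exp s) := by ring
      _ < Real.exp (-s) * (1.0015 * (s ^ 2 + 6 * s + 12)) := this
      _ = 1.0015 * Real.exp (-s) * (s ^ 2 + 6 * s + 12) := by ring
  constructor
  · apply div_pos _ hEn
    rw [sub_pos, lt_div_iff₀ hd]
    linarith
  · rw [div_lt_iff₀ hEn, sub_lt_iff_lt_add]
    rw [div_lt_iff₀ hd]
    nlinarith [h2]
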